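/- For any Hermitian n×n complex matrix A = (a_{ij}) with n ≥ 2, setting κ₀ = (16(n-1)+27)/(80(n-1)+144), one has -9/8·Σ_{i=1}^n |a_{ni}|² + 7/8·|a_{nn}|² - 1/2·(Σ_{i=1}^n a_{ii})·a_{nn} ≥ -κ₀·(Σ_{i=1}^n a_{ii})² - 9/16·Σ_{i,j=1}^n |a_{ij}|². -/

import Mathlib

open Finset

theorem hermitian_key_ineq (n : ℕ) (hn : 2 ≤ n)
    (A : Matrix (Fin n) (Fin n) ℂ) (hA : A.IsHermitian)
    (κ₀ : ℝ) (hκ : κ₀ = (16 * ((n : ℝ) - 1) + 27) / (80 * ((n : ℝ) - 1) + 144)) :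
    let ln : Fin n := ⟨n - 1, by omega⟩;
    -9/8 * (∑ i, ‖A ln i‖ ^ 2) + 7/8 * ‖A ln ln‖ ^ 2
      - 1/2 * (∑ i, (A i i).re) * (A ln ln).re ≥
      -κ₀ * (∑ i, (A i i).re) ^ 2 - 9/16 * (∑ i, ∑ j, ‖A i j‖ ^ 2) := by
  intro ln
  set m : ℝ := (n : ℝ) - 1 with hm_def
  have hn' : (2:ℝ) ≤ (n:ℝ) := by exact_mod_cast hn
  have hm : (1:ℝ) ≤ m := by simp only [hm_def]; linarith
  -- abbreviations
  set S : ℝ := ∑ i, ‖A ln i‖ ^ 2 with hS_def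
  set T : ℝ := ∑ i, ∑ j, ‖A i j‖ ^ 2 with hT_def
  set t : ℝ := ∑ i, (A i i).re with ht_def
  set d : ℝ := (A ln ln).re with hd_def
  set Q : ℝ := ∑ i ∈ univ.erase ln, (A i i).re ^ 2 with hQ_def
  -- symmetry of absolute values
  have habs : ∀ i j, ‖A i j‖ = ‖A j i‖ := by
    intro i j
    rw [← hA.apply i j]
    exact Complex.norm_conj _
  -- diagonal entries are real
  have hdiag : ∀ i, ‖A i i‖ ^ 2 = (A i i).re ^ 2 := by
    intro i
    have h := hA.apply i i
    have him : (A i i).im = 0 := by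
      have := congrArg Complex.im h
      simp [Complex.conj_im] at this
      linarith
    rw [Complex.sq_norm, Complex.normSq_apply, him]
    ring
  -- lower bound for T
  have hT : T ≥ 2 * S - d ^ 2 + Q := by
    have hsplit : T = S + ∑ i ∈ univ.erase ln, ∑ j, ‖A i j‖ ^ 2 := by
      rw [hT_def, ← Finset.add_sum_erase _ _ (Finset.mem_univ ln)]
    have hrow : ∀ i ∈ univ.erase ln,
        ‖A ln i‖ ^ 2 + (A i i).re ^ 2 ≤ ∑ j, ‖A i j‖ ^ 2 := by
      intro i hi
      have hne : i ≠ ln := Finset.ne_of_mem_erase hi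
      have hsub : ({ln, i} : Finset (Fin n)) ⊆ univ := Finset.subset_univ _
      have := Finset.sum_le_sum_of_subset_of_nonneg hsub
        (fun j _ _ => by positivity : ∀ j ∈ (univ : Finset (Fin n)),
          j ∉ ({ln, i} : Finset (Fin n)) → 0 ≤ ‖A i j‖ ^ 2)
      rw [Finset.sum_pair (Ne.symm hne)] at this
      calc ‖A ln i‖ ^ 2 + (A i i).re ^ 2
          = ‖A i ln‖ ^ 2 + ‖A i i‖ ^ 2 := by
            rw [habs i ln, hdiag i]
        _ ≤ ∑ j, ‖A i j‖ ^ 2 := this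
    have hsum : ∑ i ∈ univ.erase ln, (‖A ln i‖ ^ 2 + (A i i).re ^ 2)
        ≤ ∑ i ∈ univ.erase ln, ∑ j, ‖A i j‖ ^ 2 :=
      Finset.sum_le_sum hrow
    rw [Finset.sum_add_distrib] at hsum
    have herase : ∑ i ∈ univ.erase ln, ‖A ln i‖ ^ 2 = S - d ^ 2 := by
      have : S = ‖A ln ln‖ ^ 2 + ∑ i ∈ univ.erase ln, ‖A ln i‖ ^ 2 := by
        rw [hS_def, ← Finset.add_sum_erase _ _ (Finset.mem_univ ln)]
      rw [hdiag ln] at this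
      linarith
    rw [herase, ← hQ_def] at hsum
    linarith [hsplit, hsum]
  -- Cauchy-Schwarz
  have hCS : (t - d) ^ 2 ≤ m * Q := by
    have hsum : t - d = ∑ i ∈ univ.erase ln, (A i i).re := by
      have : t = (A ln ln).re + ∑ i ∈ univ.erase ln, (A i i).re := by
        rw [ht_def, ← Finset.add_sum_erase _ _ (Finset.mem_univ ln)]
      linarith
    have hcard : ((univ.erase ln).card : ℝ) = m := by
      rw [Finset.card_erase_of_mem (Finset.mem_univ ln), Finset.card_univ, Fintype.card_fin]
      rw [hm_def]
      have : (1:ℕ) ≤ n := by omega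
      push_cast [this]
      ring
    have := sq_sum_le_card_mul_sum_sq (s := univ.erase ln) (f := fun i => (A i i).re)
    rw [hsum]
    calc (∑ i ∈ univ.erase ln, (A i i).re) ^ 2
        ≤ ((univ.erase ln).card : ℝ) * ∑ i ∈ univ.erase ln, (A i i).re ^ 2 := this
      _ = m * Q := by rw [hcard, hQ_def]
  -- κ₀ identity
  have h59 : (0:ℝ) < 5 * m + 9 := by linarith
  have hκ' : κ₀ * (16 * (5 * m + 9)) = 16 * m + 27 := by
    rw [hκ, div_mul_eq_mul_div, div_eq_iff (by linarith : (80:ℝ) * m + 144 ≠ 0)]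
    ring
  -- main inequality
  rw [hdiag ln, ← hd_def]
  have h1 : 9 * m * (5 * m + 9) * (T - 2 * S + d ^ 2) ≥ 9 * m * (5 * m + 9) * Q := by
    have : (0:ℝ) ≤ 9 * m * (5 * m + 9) := by positivity
    exact mul_le_mul_of_nonneg_left (by linarith) this
  have h2 : 9 * (5 * m + 9) * (m * Q) ≥ 9 * (5 * m + 9) * (t - d) ^ 2 := by
    have : (0:ℝ) ≤ 9 * (5 * m + 9) := by positivity
    exact mul_le_mul_of_nonneg_left hCS this
  have h3 : κ₀ * (16 * (5 * m + 9)) * (m * t ^ 2) = (16 * m + 27) * (m * t ^ 2) := by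
    rw [hκ']
  have hid : 16 * m * (5 * m + 9) *
      (κ₀ * t ^ 2 - 1/2 * t * d + 7/8 * d ^ 2 - 9/8 * S + 9/16 * T) =
      (9 * m * (5 * m + 9) * (T - 2 * S + d ^ 2) - 9 * m * (5 * m + 9) * Q)
      + (9 * (5 * m + 9) * (m * Q) - 9 * (5 * m + 9) * (t - d) ^ 2)
      + ((5 * m + 9) * d - (4 * m + 9) * t) ^ 2
      + (κ₀ * (16 * (5 * m + 9)) * (m * t ^ 2) - (16 * m + 27) * (m * t ^ 2)) := by
    ring
  have key : 0 ≤ 16 * m * (5 * m + 9) *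
      (κ₀ * t ^ 2 - 1/2 * t * d + 7/8 * d ^ 2 - 9/8 * S + 9/16 * T) := by
    rw [hid]
    have hsq := sq_nonneg ((5 * m + 9) * d - (4 * m + 9) * t)
    linarith
  have hpos : (0:ℝ) < 16 * m * (5 * m + 9) := by positivity
  have hG := (mul_nonneg_iff_of_pos_left hpos).mp key
  linarith
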